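/- For every consistent counter machine Γ with m states and every designated halting state i* ∈ {1,…,m}, the modified reflection matrix R* of the associated Skorokhod problem is a completely-S matrix. -/
import Mathlib


open scoped BigOperators

/-- A Skorokhod solution for the matrix `R` and input path `x`:
continuous `y, z` on `[0,∞)` with `z = x + R y`, `z ≥ 0`, `y 0 = 0`,
each `y j` nondecreasing, and `y j` does not increase while `z j > 0`
(the Lebesgue–Stieltjes measure of `y j` vanishes on `{s | z s j > 0}`). -/
def IsSkorokhodSolution {n : Type*} [Fintype n] (R : Matrix n n ℝ)
    (x y z : ℝ → n → ℝ) : Prop :=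
  ContinuousOn y (Set.Ici 0) ∧
  ContinuousOn z (Set.Ici 0) ∧
  (∀ t : ℝ, 0 ≤ t → z t = x t + R.mulVec (y t)) ∧
  (∀ t : ℝ, 0 ≤ t → ∀ j, 0 ≤ z t j) ∧
  (y 0 = 0) ∧
  (∀ j, MonotoneOn (fun t => y t j) (Set.Ici 0)) ∧
  (∀ j, ∀ s₁ s₂ : ℝ, 0 ≤ s₁ → s₁ ≤ s₂ →
      (∀ s ∈ Set.Ioo s₁ s₂, 0 < z s j) → y s₂ j = y s₁ j)

/-- `R` is an S-matrix: some nonnegative `w` with `R w > 0` componentwise. -/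
def IsSMatrix {n : Type*} [Fintype n] (R : Matrix n n ℝ) : Prop :=
  ∃ w : n → ℝ, (∀ i, 0 ≤ w i) ∧ (∀ i, 0 < R.mulVec w i)

/-- `R` is completely-S: every (nonempty) principal submatrix is an S-matrix. -/
def IsCompletelyS {n : Type*} [Fintype n] [DecidableEq n] (R : Matrix n n ℝ) : Prop :=
  ∀ I : Finset n, I.Nonempty →
    IsSMatrix (R.submatrix (fun a : I => (a : n)) (fun a : I => (a : n)))

/-- Stability of the fluid model `(z₀, θ, R)`: every Skorokhod solution for
`x t = z₀ + θ t` satisfies `z t → 0` as `t → ∞`. -/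
def FluidStable {n : Type*} [Fintype n] (z0 θv : n → ℝ) (R : Matrix n n ℝ) : Prop :=
  ∀ y z : ℝ → n → ℝ,
    IsSkorokhodSolution R (fun t i => z0 i + θv i * t) y z →
    Filter.Tendsto z Filter.atTop (nhds 0)

/-- `f` is active at rate `r` on `(s₁, s₂)`. -/
def ActiveAtRate (f : ℝ → ℝ) (r s₁ s₂ : ℝ) : Prop :=
  ∀ s ∈ Set.Ioo s₁ s₂, f s - f s₁ = r * (s - s₁)

/-- `f` is active at unit rate on `(s₁, s₂)`. -/
def UnitActive (f : ℝ → ℝ) (s₁ s₂ : ℝ) : Prop := ActiveAtRate f 1 s₁ s₂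

/-- `f` is passive (constant) on `(s₁, s₂)`. -/
def Passive (f : ℝ → ℝ) (s₁ s₂ : ℝ) : Prop := ∀ s ∈ Set.Ioo s₁ s₂, f s = f s₁

/-- A counter machine with `m` states: update map with moves in
`{(-1,0),(0,-1),(0,0),(1,0),(0,1)}`, never decrementing a zero counter. -/
structure CounterMachine (m : ℕ) where
  Γ : Fin m → Bool → Bool → Fin m × ℤ × ℤ
  moves : ∀ i b c, ((Γ i b c).2.1, (Γ i b c).2.2) ∈
      ({(-1,0), (0,-1), (0,0), (1,0), (0,1)} : Set (ℤ × ℤ))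
  consistent : ∀ i b c, (b = false → 0 ≤ (Γ i b c).2.1) ∧ (c = false → 0 ≤ (Γ i b c).2.2)

/-- One step of the counter machine on a configuration. -/
def CounterMachine.step {m : ℕ} (M : CounterMachine m) :
    Fin m × ℕ × ℕ → Fin m × ℕ × ℕ := fun cfg =>
  let r := M.Γ cfg.1 (decide (0 < cfg.2.1)) (decide (0 < cfg.2.2))
  (r.1, ((cfg.2.1 : ℤ) + r.2.1).toNat, ((cfg.2.2 : ℤ) + r.2.2).toNat)

/-- Index set of the associated Skorokhod problem: groups A (5), B (m), C (2),
D (2), E (4m), F (4m); total dimension 5m + 9. -/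
inductive Idx (m : ℕ) where
  | A : Fin 5 → Idx m
  | B : Fin m → Idx m
  | C : Fin 2 → Idx m
  | D : Fin 2 → Idx m
  | E : Fin m → Bool → Bool → Idx m
  | F : Fin m → Bool → Bool → Idx m
  deriving DecidableEq, Fintype

/-- Numeric value of a bit. -/
def bnum (b : Bool) : ℝ := if b then 1 else 0

/-- Real indicator of a decidable proposition. -/
def indC (P : Prop) [Decidable P] : ℝ := if P then 1 else 0

/-- The 5×5 block AA. -/
def AAmat : Matrix (Fin 5) (Fin 5) ℝ :=
  !![1,2,1,1,0; 0,1,2,1,1; 1,0,1,2,1; 1,1,0,1,2; 2,1,1,0,1]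

/-- The reflection matrix `R` associated with the counter machine `M`. -/
def Rmat {m : ℕ} (M : CounterMachine m) : Matrix (Idx m) (Idx m) ℝ :=
  fun p q => match p, q with
  | .A k, .A l => AAmat k l
  | .B _, .A l => if l = 0 then -1 else 0
  | .B j, .B j' => if j' = j then 1 else 0
  | .B j, .E i b c => if (M.Γ i b c).1 = j then 0 else 1
  | .C _, .A l => if l = 0 ∨ l = 3 then -1 else 0
  | .C k, .C k' => if k' = k then 1 else 0
  | .C k, .D k' => if k' = k then 1 else 0
  | .C k, .E i b c =>
      (if k = 0 then ((M.Γ i b c).2.1 : ℝ) else ((M.Γ i b c).2.2 : ℝ)) + 1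
  | .D _, .A l => if l = 1 then -1 else 0
  | .D k, .C k' => if k' = k then 1 else 0
  | .D k, .D k' => if k' = k then 1 else 0
  | .E _ b c, .A l => if l = 0 then -(bnum b) - bnum c else if l = 2 then -1 else 0
  | .E i _ _, .B j => if j = i then -1 else 0
  | .E _ b c, .C k => if k = 0 then 2 * bnum b - 1 else 2 * bnum c - 1
  | .E i b c, .E i' b' c' => if i' = i ∧ b' = b ∧ c' = c then 1 else 0
  | .E i b c, .F i' b' c' => if i' = i ∧ b' = b ∧ c' = c then 1 else 0
  | .F _ b c, .A l => if l = 0 then -(bnum b) - bnum c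
      else if l = 2 then -1 else if l = 3 then -4 else if l = 4 then 4 else 0
  | .F i _ _, .B j => if j = i then -1 else 0
  | .F _ b c, .C k => if k = 0 then 2 * bnum b - 1 else 2 * bnum c - 1
  | .F i b c, .E i' b' c' => if i' = i ∧ b' = b ∧ c' = c then 1 else 0
  | .F i b c, .F i' b' c' => if i' = i ∧ b' = b ∧ c' = c then 1 else 0
  | _, _ => 0

/-- The modified reflection matrix `R*` with halting state `i*`. -/
def RmatStar {m : ℕ} (M : CounterMachine m) (istar : Fin m) :
    Matrix (Idx m) (Idx m) ℝ :=
  fun p q => match p, q with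
  | .A k, .B j => if j = istar ∧ (k = 2 ∨ k = 3 ∨ k = 4) then -1 else 0
  | .E i b c, .B j =>
      if j = istar then -3 + bnum b + bnum c else if j = i then -1 else 0
  | .F i b c, .B j =>
      if j = istar then -4 + bnum b + bnum c else if j = i then -1 else 0
  | p, q => Rmat M p q

/-- The drift vector θ: −1 on the A-coordinates and 0 elsewhere. -/
def thetaVec (m : ℕ) : Idx m → ℝ := fun p => match p with
  | .A _ => -1
  | _ => 0

/-- The encoding `z^{i,C₁,C₂}` of a configuration as a state of the
Skorokhod problem. -/
def encCfg {m : ℕ} (i : Fin m) (C₁ C₂ : ℕ) : Idx m → ℝ := fun p => match p with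
  | .A k => if k = 0 ∨ k = 4 then 0 else 1
  | .B j => if j = i then 0 else 1
  | .C k => if k = 0 then (C₁ : ℝ) else (C₂ : ℝ)
  | .D _ => 0
  | .E _ _ _ => 3
  | .F _ _ _ => 4

/-- The linear input path `x t = z^{i,C₁,C₂} + θ t`. -/
def fluidX {m : ℕ} (i : Fin m) (C₁ C₂ : ℕ) : ℝ → Idx m → ℝ :=
  fun t p => encCfg i C₁ C₂ p + thetaVec m p * t

/-- The quantity Υ(i′,b,c) of the paper (for current configuration (i,C₁,C₂)). -/
def Upsilon {m : ℕ} (i : Fin m) (C₁ C₂ : ℕ) (i' : Fin m) (b c : Bool) : ℝ :=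
  -(bnum b) - bnum c + (2 * bnum b - 1) * indC (C₁ = 0)
    + (2 * bnum c - 1) * indC (C₂ = 0) - indC (i' = i)
/-! ### Auxiliary development -/

section Aux

variable {m : ℕ}

/-- Equivalence used to split sums over `Idx m` into the six groups. -/
def idxEquiv (m : ℕ) :
    (Fin 5 ⊕ Fin m ⊕ Fin 2 ⊕ Fin 2 ⊕ (Fin m × Bool × Bool) ⊕ (Fin m × Bool × Bool)) ≃ Idx m where
  toFun x := match x with
    | .inl k => .A k
    | .inr (.inl j) => .B j
    | .inr (.inr (.inl k)) => .C k
    | .inr (.inr (.inr (.inl k))) => .D k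
    | .inr (.inr (.inr (.inr (.inl t)))) => .E t.1 t.2.1 t.2.2
    | .inr (.inr (.inr (.inr (.inr t)))) => .F t.1 t.2.1 t.2.2
  invFun p := match p with
    | .A k => .inl k
    | .B j => .inr (.inl j)
    | .C k => .inr (.inr (.inl k))
    | .D k => .inr (.inr (.inr (.inl k)))
    | .E i b c => .inr (.inr (.inr (.inr (.inl (i,b,c)))))
    | .F i b c => .inr (.inr (.inr (.inr (.inr (i,b,c)))))
  left_inv := by rintro (k | j | k | k | t | t) <;> rfl
  right_inv := by intro p; cases p <;> rfl

lemma sum_idx (f : Idx m → ℝ) :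
    ∑ p, f p =
      (∑ k : Fin 5, f (.A k)) + (∑ j : Fin m, f (.B j)) + (∑ k : Fin 2, f (.C k))
      + (∑ k : Fin 2, f (.D k))
      + (∑ t : Fin m × Bool × Bool, f (.E t.1 t.2.1 t.2.2))
      + (∑ t : Fin m × Bool × Bool, f (.F t.1 t.2.1 t.2.2)) := by
  rw [← Equiv.sum_comp (idxEquiv m) f]
  simp only [Fintype.sum_sum_type, idxEquiv, Equiv.coe_fn_mk]
  ring

lemma sum_triple (f : Fin m × Bool × Bool → ℝ) (i : Fin m) (b c : Bool) :
    ∑ t : Fin m × Bool × Bool,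
      (if t.1 = i ∧ t.2.1 = b ∧ t.2.2 = c then f t else 0) = f (i, b, c) := by
  rw [Finset.sum_eq_single (i, b, c)]
  · simp
  · rintro ⟨i', b', c'⟩ _ h
    rw [if_neg]
    rintro ⟨rfl, rfl, rfl⟩
    exact h rfl
  · intro h; exact absurd (Finset.mem_univ _) h

lemma bnum_nonneg (b : Bool) : 0 ≤ bnum b := by cases b <;> norm_num [bnum]

lemma bnum_le_one (b : Bool) : bnum b ≤ 1 := by cases b <;> norm_num [bnum]

lemma delta_ge (M : CounterMachine m) (i : Fin m) (b c : Bool) :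
    (-1 : ℝ) ≤ ((M.Γ i b c).2.1 : ℝ) ∧ (-1 : ℝ) ≤ ((M.Γ i b c).2.2 : ℝ) := by
  have h := M.moves i b c
  simp only [Set.mem_insert_iff, Set.mem_singleton_iff, Prod.mk.injEq] at h
  rcases h with ⟨h1, h2⟩ | ⟨h1, h2⟩ | ⟨h1, h2⟩ | ⟨h1, h2⟩ | ⟨h1, h2⟩ <;>
    rw [h1, h2] <;> norm_num

/-- The weight vector witnessing the S-property for the principal submatrix
indexed by `I`. -/
noncomputable def Wgt (istar : Fin m) (I : Finset (Idx m)) : Idx m → ℝ := fun p =>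
  match p with
  | .A k => if Idx.A k ∈ I then 1 else 0
  | .B j => if Idx.B j ∈ I then
      (if j = istar then (if Idx.A 0 ∈ I then 3/2 else 1/2) else 2) else 0
  | .C k => if Idx.C k ∈ I then 3 else 0
  | .D k => if Idx.D k ∈ I then 2 else 0
  | .E i b c => if Idx.E i b c ∈ I then 100 else 0
  | .F i b c => if Idx.F i b c ∈ I then 100 else 0

variable (istar : Fin m) (I : Finset (Idx m))

lemma wgt_nonneg (p : Idx m) : 0 ≤ Wgt istar I p := by
  cases p <;> simp only [Wgt] <;> split_ifs <;> norm_num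

lemma wgt_notMem {p : Idx m} (h : p ∉ I) : Wgt istar I p = 0 := by
  cases p <;> exact if_neg h

lemma wgt_A_le (k : Fin 5) : Wgt istar I (.A k) ≤ 1 := by
  simp only [Wgt]; split_ifs <;> norm_num

lemma wgt_B_le (j : Fin m) : Wgt istar I (.B j) ≤ 2 := by
  simp only [Wgt]; split_ifs <;> norm_num

lemma wgt_C_le (k : Fin 2) : Wgt istar I (.C k) ≤ 3 := by
  simp only [Wgt]; split_ifs <;> norm_num

lemma wgt_Bistar_le : Wgt istar I (.B istar) ≤ Wgt istar I (.A 0) + 1/2 := by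
  simp only [Wgt]; split_ifs <;> norm_num

lemma wgt_A_mem {k : Fin 5} (h : Idx.A k ∈ I) : Wgt istar I (.A k) = 1 := if_pos h

lemma wgt_C_mem {k : Fin 2} (h : Idx.C k ∈ I) : Wgt istar I (.C k) = 3 := if_pos h

lemma wgt_D_mem {k : Fin 2} (h : Idx.D k ∈ I) : Wgt istar I (.D k) = 2 := if_pos h

lemma wgt_E_mem {i : Fin m} {b c : Bool} (h : Idx.E i b c ∈ I) :
    Wgt istar I (.E i b c) = 100 := if_pos h

lemma wgt_F_mem {i : Fin m} {b c : Bool} (h : Idx.F i b c ∈ I) :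
    Wgt istar I (.F i b c) = 100 := if_pos h

lemma wgt_B_mem {j : Fin m} (h : Idx.B j ∈ I) (hj : j ≠ istar) :
    Wgt istar I (.B j) = 2 := by
  simp only [Wgt, if_pos h, if_neg hj]

lemma wgt_Bistar_mem (h : Idx.B istar ∈ I) :
    Wgt istar I (.B istar) = Wgt istar I (.A 0) + 1/2 := by
  simp only [Wgt, if_pos h, if_pos rfl]
  split_ifs <;> norm_num

end Aux

section Entries

variable {m : ℕ} (M : CounterMachine m) (istar : Fin m)

lemma RS_AA (k l : Fin 5) : RmatStar M istar (.A k) (.A l) = AAmat k l := rfl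
lemma RS_AB (k : Fin 5) (j : Fin m) : RmatStar M istar (.A k) (.B j) =
    if j = istar ∧ (k = 2 ∨ k = 3 ∨ k = 4) then -1 else 0 := rfl
lemma RS_AC (k : Fin 5) (l : Fin 2) : RmatStar M istar (.A k) (.C l) = 0 := rfl
lemma RS_AD (k : Fin 5) (l : Fin 2) : RmatStar M istar (.A k) (.D l) = 0 := rfl
lemma RS_AE (k : Fin 5) (i : Fin m) (b c : Bool) :
    RmatStar M istar (.A k) (.E i b c) = 0 := rfl
lemma RS_AF (k : Fin 5) (i : Fin m) (b c : Bool) :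
    RmatStar M istar (.A k) (.F i b c) = 0 := rfl

lemma RS_BA (j : Fin m) (l : Fin 5) : RmatStar M istar (.B j) (.A l) =
    if l = 0 then -1 else 0 := rfl
lemma RS_BB (j j' : Fin m) : RmatStar M istar (.B j) (.B j') =
    if j' = j then 1 else 0 := rfl
lemma RS_BC (j : Fin m) (l : Fin 2) : RmatStar M istar (.B j) (.C l) = 0 := rfl
lemma RS_BD (j : Fin m) (l : Fin 2) : RmatStar M istar (.B j) (.D l) = 0 := rfl
lemma RS_BE (j i : Fin m) (b c : Bool) : RmatStar M istar (.B j) (.E i b c) =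
    if (M.Γ i b c).1 = j then 0 else 1 := rfl
lemma RS_BF (j i : Fin m) (b c : Bool) : RmatStar M istar (.B j) (.F i b c) = 0 := rfl

lemma RS_CA (k : Fin 2) (l : Fin 5) : RmatStar M istar (.C k) (.A l) =
    if l = 0 ∨ l = 3 then -1 else 0 := rfl
lemma RS_CB (k : Fin 2) (j : Fin m) : RmatStar M istar (.C k) (.B j) = 0 := rfl
lemma RS_CC (k k' : Fin 2) : RmatStar M istar (.C k) (.C k') =
    if k' = k then 1 else 0 := rfl
lemma RS_CD (k k' : Fin 2) : RmatStar M istar (.C k) (.D k') =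
    if k' = k then 1 else 0 := rfl
lemma RS_CE (k : Fin 2) (i : Fin m) (b c : Bool) : RmatStar M istar (.C k) (.E i b c) =
    (if k = 0 then ((M.Γ i b c).2.1 : ℝ) else ((M.Γ i b c).2.2 : ℝ)) + 1 := rfl
lemma RS_CF (k : Fin 2) (i : Fin m) (b c : Bool) :
    RmatStar M istar (.C k) (.F i b c) = 0 := rfl

lemma RS_DA (k : Fin 2) (l : Fin 5) : RmatStar M istar (.D k) (.A l) =
    if l = 1 then -1 else 0 := rfl
lemma RS_DB (k : Fin 2) (j : Fin m) : RmatStar M istar (.D k) (.B j) = 0 := rfl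
lemma RS_DC (k k' : Fin 2) : RmatStar M istar (.D k) (.C k') =
    if k' = k then 1 else 0 := rfl
lemma RS_DD (k k' : Fin 2) : RmatStar M istar (.D k) (.D k') =
    if k' = k then 1 else 0 := rfl
lemma RS_DE (k : Fin 2) (i : Fin m) (b c : Bool) :
    RmatStar M istar (.D k) (.E i b c) = 0 := rfl
lemma RS_DF (k : Fin 2) (i : Fin m) (b c : Bool) :
    RmatStar M istar (.D k) (.F i b c) = 0 := rfl

lemma RS_EA (i : Fin m) (b c : Bool) (l : Fin 5) : RmatStar M istar (.E i b c) (.A l) =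
    if l = 0 then -(bnum b) - bnum c else if l = 2 then -1 else 0 := rfl
lemma RS_EB (i : Fin m) (b c : Bool) (j : Fin m) : RmatStar M istar (.E i b c) (.B j) =
    if j = istar then -3 + bnum b + bnum c else if j = i then -1 else 0 := rfl
lemma RS_EC (i : Fin m) (b c : Bool) (k : Fin 2) : RmatStar M istar (.E i b c) (.C k) =
    if k = 0 then 2 * bnum b - 1 else 2 * bnum c - 1 := rfl
lemma RS_ED (i : Fin m) (b c : Bool) (k : Fin 2) :
    RmatStar M istar (.E i b c) (.D k) = 0 := rfl
lemma RS_EE (i : Fin m) (b c : Bool) (i' : Fin m) (b' c' : Bool) :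
    RmatStar M istar (.E i b c) (.E i' b' c') =
      if i' = i ∧ b' = b ∧ c' = c then 1 else 0 := rfl
lemma RS_EF (i : Fin m) (b c : Bool) (i' : Fin m) (b' c' : Bool) :
    RmatStar M istar (.E i b c) (.F i' b' c') =
      if i' = i ∧ b' = b ∧ c' = c then 1 else 0 := rfl

lemma RS_FA (i : Fin m) (b c : Bool) (l : Fin 5) : RmatStar M istar (.F i b c) (.A l) =
    if l = 0 then -(bnum b) - bnum c
      else if l = 2 then -1 else if l = 3 then -4 else if l = 4 then 4 else 0 := rfl
lemma RS_FB (i : Fin m) (b c : Bool) (j : Fin m) : RmatStar M istar (.F i b c) (.B j) =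
    if j = istar then -4 + bnum b + bnum c else if j = i then -1 else 0 := rfl
lemma RS_FC (i : Fin m) (b c : Bool) (k : Fin 2) : RmatStar M istar (.F i b c) (.C k) =
    if k = 0 then 2 * bnum b - 1 else 2 * bnum c - 1 := rfl
lemma RS_FD (i : Fin m) (b c : Bool) (k : Fin 2) :
    RmatStar M istar (.F i b c) (.D k) = 0 := rfl
lemma RS_FE (i : Fin m) (b c : Bool) (i' : Fin m) (b' c' : Bool) :
    RmatStar M istar (.F i b c) (.E i' b' c') =
      if i' = i ∧ b' = b ∧ c' = c then 1 else 0 := rfl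
lemma RS_FF (i : Fin m) (b c : Bool) (i' : Fin m) (b' c' : Bool) :
    RmatStar M istar (.F i b c) (.F i' b' c') =
      if i' = i ∧ b' = b ∧ c' = c then 1 else 0 := rfl

end Entries
lemma AAv00 : AAmat 0 0 = 1 := rfl
lemma AAv01 : AAmat 0 1 = 2 := rfl
lemma AAv02 : AAmat 0 2 = 1 := rfl
lemma AAv03 : AAmat 0 3 = 1 := rfl
lemma AAv04 : AAmat 0 4 = 0 := rfl
lemma AAv10 : AAmat 1 0 = 0 := rfl
lemma AAv11 : AAmat 1 1 = 1 := rfl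
lemma AAv12 : AAmat 1 2 = 2 := rfl
lemma AAv13 : AAmat 1 3 = 1 := rfl
lemma AAv14 : AAmat 1 4 = 1 := rfl
lemma AAv20 : AAmat 2 0 = 1 := rfl
lemma AAv21 : AAmat 2 1 = 0 := rfl
lemma AAv22 : AAmat 2 2 = 1 := rfl
lemma AAv23 : AAmat 2 3 = 2 := rfl
lemma AAv24 : AAmat 2 4 = 1 := rfl
lemma AAv30 : AAmat 3 0 = 1 := rfl
lemma AAv31 : AAmat 3 1 = 1 := rfl
lemma AAv32 : AAmat 3 2 = 0 := rfl
lemma AAv33 : AAmat 3 3 = 1 := rfl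
lemma AAv34 : AAmat 3 4 = 2 := rfl
lemma AAv40 : AAmat 4 0 = 2 := rfl
lemma AAv41 : AAmat 4 1 = 1 := rfl
lemma AAv42 : AAmat 4 2 = 1 := rfl
lemma AAv43 : AAmat 4 3 = 0 := rfl
lemma AAv44 : AAmat 4 4 = 1 := rfl
section Key

variable {m : ℕ} (M : CounterMachine m) (istar : Fin m) (I : Finset (Idx m))

lemma key_B {j : Fin m} (hp : Idx.B j ∈ I) :
    0 < ∑ q, RmatStar M istar (.B j) q * Wgt istar I q := by
  rw [sum_idx]
  have hA : (∑ l : Fin 5, RmatStar M istar (.B j) (.A l) * Wgt istar I (.A l))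
      = -(Wgt istar I (.A 0)) := by
    simp [RS_BA, Fin.sum_univ_five]
  have hB : (∑ j' : Fin m, RmatStar M istar (.B j) (.B j') * Wgt istar I (.B j'))
      = Wgt istar I (.B j) := by
    simp only [RS_BB, ite_mul, one_mul, zero_mul]
    simp
  have hC : (∑ l : Fin 2, RmatStar M istar (.B j) (.C l) * Wgt istar I (.C l)) = 0 := by
    simp [RS_BC]
  have hD : (∑ l : Fin 2, RmatStar M istar (.B j) (.D l) * Wgt istar I (.D l)) = 0 := by
    simp [RS_BD]
  have hE : 0 ≤ ∑ t : Fin m × Bool × Bool,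
      RmatStar M istar (.B j) (.E t.1 t.2.1 t.2.2) * Wgt istar I (.E t.1 t.2.1 t.2.2) := by
    refine Finset.sum_nonneg fun t _ => mul_nonneg ?_ (wgt_nonneg _ _ _)
    rw [RS_BE]; split_ifs <;> norm_num
  have hF : (∑ t : Fin m × Bool × Bool,
      RmatStar M istar (.B j) (.F t.1 t.2.1 t.2.2) * Wgt istar I (.F t.1 t.2.1 t.2.2)) = 0 := by
    simp [RS_BF]
  rw [hA, hB, hC, hD, hF]
  have h0 : Wgt istar I (.A 0) ≤ 1 := wgt_A_le istar I 0
  by_cases hj : j = istar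
  · rw [hj] at hp hE ⊢
    rw [wgt_Bistar_mem istar I hp]
    linarith
  · rw [wgt_B_mem istar I hp hj]
    linarith

end Key
section Key2

variable {m : ℕ} (M : CounterMachine m) (istar : Fin m) (I : Finset (Idx m))

lemma key_A {k : Fin 5} (hp : Idx.A k ∈ I) :
    0 < ∑ q, RmatStar M istar (.A k) q * Wgt istar I q := by
  rw [sum_idx]
  have hC : (∑ l : Fin 2, RmatStar M istar (.A k) (.C l) * Wgt istar I (.C l)) = 0 := by
    simp [RS_AC]
  have hD : (∑ l : Fin 2, RmatStar M istar (.A k) (.D l) * Wgt istar I (.D l)) = 0 := by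
    simp [RS_AD]
  have hE : (∑ t : Fin m × Bool × Bool,
      RmatStar M istar (.A k) (.E t.1 t.2.1 t.2.2) * Wgt istar I (.E t.1 t.2.1 t.2.2)) = 0 := by
    simp [RS_AE]
  have hF : (∑ t : Fin m × Bool × Bool,
      RmatStar M istar (.A k) (.F t.1 t.2.1 t.2.2) * Wgt istar I (.F t.1 t.2.1 t.2.2)) = 0 := by
    simp [RS_AF]
  rw [hC, hD, hE, hF]
  have h1 : Wgt istar I (.A k) = 1 := wgt_A_mem istar I hp
  have h0 : Wgt istar I (.A 0) ≤ 1 := wgt_A_le istar I 0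
  have hb := wgt_Bistar_le istar I
  have n0 := wgt_nonneg istar I (.A 0)
  have n1 := wgt_nonneg istar I (.A 1)
  have n2 := wgt_nonneg istar I (.A 2)
  have n3 := wgt_nonneg istar I (.A 3)
  have n4 := wgt_nonneg istar I (.A 4)
  have nb := wgt_nonneg istar I (.B istar)
  have hk : ∀ k' : Fin 5, k' = 0 ∨ k' = 1 ∨ k' = 2 ∨ k' = 3 ∨ k' = 4 := by decide
  rcases hk k with rfl | rfl | rfl | rfl | rfl
  · have hB : (∑ j : Fin m, RmatStar M istar (.A 0) (.B j) * Wgt istar I (.B j)) = 0 := by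
      simp [RS_AB]
    rw [hB, Fin.sum_univ_five]
    simp only [RS_AA, AAv00, AAv01, AAv02, AAv03, AAv04]
    linarith
  · have hB : (∑ j : Fin m, RmatStar M istar (.A 1) (.B j) * Wgt istar I (.B j)) = 0 := by
      simp [RS_AB]
    rw [hB, Fin.sum_univ_five]
    simp only [RS_AA, AAv10, AAv11, AAv12, AAv13, AAv14]
    linarith
  · have hB : (∑ j : Fin m, RmatStar M istar (.A 2) (.B j) * Wgt istar I (.B j))
        = -(Wgt istar I (.B istar)) := by
      simp [RS_AB, ite_mul]
    rw [hB, Fin.sum_univ_five]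
    simp only [RS_AA, AAv20, AAv21, AAv22, AAv23, AAv24]
    linarith
  · have hB : (∑ j : Fin m, RmatStar M istar (.A 3) (.B j) * Wgt istar I (.B j))
        = -(Wgt istar I (.B istar)) := by
      simp [RS_AB, ite_mul]
    rw [hB, Fin.sum_univ_five]
    simp only [RS_AA, AAv30, AAv31, AAv32, AAv33, AAv34]
    linarith
  · have hB : (∑ j : Fin m, RmatStar M istar (.A 4) (.B j) * Wgt istar I (.B j))
        = -(Wgt istar I (.B istar)) := by
      simp [RS_AB, ite_mul]
    rw [hB, Fin.sum_univ_five]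
    simp only [RS_AA, AAv40, AAv41, AAv42, AAv43, AAv44]
    linarith

lemma key_C {k : Fin 2} (hp : Idx.C k ∈ I) :
    0 < ∑ q, RmatStar M istar (.C k) q * Wgt istar I q := by
  rw [sum_idx]
  have hA : (∑ l : Fin 5, RmatStar M istar (.C k) (.A l) * Wgt istar I (.A l))
      = -Wgt istar I (.A 0) - Wgt istar I (.A 3) := by
    simp [RS_CA, Fin.sum_univ_five]
    ring
  have hB : (∑ j : Fin m, RmatStar M istar (.C k) (.B j) * Wgt istar I (.B j)) = 0 := by
    simp [RS_CB]
  have hC : (∑ l : Fin 2, RmatStar M istar (.C k) (.C l) * Wgt istar I (.C l))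
      = Wgt istar I (.C k) := by
    simp only [RS_CC, ite_mul, one_mul, zero_mul]
    simp
  have hD : (∑ l : Fin 2, RmatStar M istar (.C k) (.D l) * Wgt istar I (.D l))
      = Wgt istar I (.D k) := by
    simp only [RS_CD, ite_mul, one_mul, zero_mul]
    simp
  have hE : 0 ≤ ∑ t : Fin m × Bool × Bool,
      RmatStar M istar (.C k) (.E t.1 t.2.1 t.2.2) * Wgt istar I (.E t.1 t.2.1 t.2.2) := by
    refine Finset.sum_nonneg fun t _ => mul_nonneg ?_ (wgt_nonneg _ _ _)
    rw [RS_CE]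
    rcases delta_ge M t.1 t.2.1 t.2.2 with ⟨g1, g2⟩
    split_ifs <;> linarith
  have hF : (∑ t : Fin m × Bool × Bool,
      RmatStar M istar (.C k) (.F t.1 t.2.1 t.2.2) * Wgt istar I (.F t.1 t.2.1 t.2.2)) = 0 := by
    simp [RS_CF]
  rw [hA, hB, hC, hD, hF]
  have h1 : Wgt istar I (.C k) = 3 := wgt_C_mem istar I hp
  have h0 : Wgt istar I (.A 0) ≤ 1 := wgt_A_le istar I 0
  have h3 : Wgt istar I (.A 3) ≤ 1 := wgt_A_le istar I 3
  have nD := wgt_nonneg istar I (.D k)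
  linarith

lemma key_D {k : Fin 2} (hp : Idx.D k ∈ I) :
    0 < ∑ q, RmatStar M istar (.D k) q * Wgt istar I q := by
  rw [sum_idx]
  have hA : (∑ l : Fin 5, RmatStar M istar (.D k) (.A l) * Wgt istar I (.A l))
      = -Wgt istar I (.A 1) := by
    simp [RS_DA, Fin.sum_univ_five]
  have hB : (∑ j : Fin m, RmatStar M istar (.D k) (.B j) * Wgt istar I (.B j)) = 0 := by
    simp [RS_DB]
  have hC : (∑ l : Fin 2, RmatStar M istar (.D k) (.C l) * Wgt istar I (.C l))
      = Wgt istar I (.C k) := by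
    simp only [RS_DC, ite_mul, one_mul, zero_mul]
    simp
  have hD : (∑ l : Fin 2, RmatStar M istar (.D k) (.D l) * Wgt istar I (.D l))
      = Wgt istar I (.D k) := by
    simp only [RS_DD, ite_mul, one_mul, zero_mul]
    simp
  have hE : (∑ t : Fin m × Bool × Bool,
      RmatStar M istar (.D k) (.E t.1 t.2.1 t.2.2) * Wgt istar I (.E t.1 t.2.1 t.2.2)) = 0 := by
    simp [RS_DE]
  have hF : (∑ t : Fin m × Bool × Bool,
      RmatStar M istar (.D k) (.F t.1 t.2.1 t.2.2) * Wgt istar I (.F t.1 t.2.1 t.2.2)) = 0 := by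
    simp [RS_DF]
  rw [hA, hB, hC, hD, hE, hF]
  have h1 : Wgt istar I (.D k) = 2 := wgt_D_mem istar I hp
  have h0 : Wgt istar I (.A 1) ≤ 1 := wgt_A_le istar I 1
  have nC := wgt_nonneg istar I (.C k)
  linarith

end Key2
section Key3

variable {m : ℕ} (M : CounterMachine m) (istar : Fin m) (I : Finset (Idx m))

lemma sum_B_lower (i : Fin m) (a : ℝ) (ha : -4 ≤ a) (_ha' : a ≤ 0)
    (f : Fin m → ℝ) (hf : ∀ j, f j = if j = istar then a else if j = i then -1 else 0) :
    (-10 : ℝ) ≤ ∑ j : Fin m, f j * Wgt istar I (.B j) := by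
  have step : ∀ j : Fin m,
      (if j = istar then (-8 : ℝ) else 0) + (if j = i then (-2 : ℝ) else 0)
        ≤ f j * Wgt istar I (.B j) := by
    intro j
    have hw0 := wgt_nonneg istar I (.B j)
    have hw2 := wgt_B_le istar I j
    rw [hf j]
    by_cases h1 : j = istar
    · rw [if_pos h1, if_pos h1]
      have h2 : (if j = i then (-2 : ℝ) else 0) ≤ 0 := by split_ifs <;> norm_num
      nlinarith
    · rw [if_neg h1, if_neg h1]
      by_cases h2 : j = i
      · rw [if_pos h2, if_pos h2]
        nlinarith
      · rw [if_neg h2, if_neg h2, zero_mul, add_zero]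
  calc (-10 : ℝ) = ∑ j : Fin m,
        ((if j = istar then (-8 : ℝ) else 0) + (if j = i then (-2 : ℝ) else 0)) := by
        rw [Finset.sum_add_distrib, Finset.sum_ite_eq' Finset.univ istar fun _ => (-8 : ℝ),
          Finset.sum_ite_eq' Finset.univ i fun _ => (-2 : ℝ)]
        norm_num
    _ ≤ _ := Finset.sum_le_sum fun j _ => step j

lemma key_E {i : Fin m} {b c : Bool} (hp : Idx.E i b c ∈ I) :
    0 < ∑ q, RmatStar M istar (.E i b c) q * Wgt istar I q := by
  rw [sum_idx]
  have b0 := bnum_nonneg b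
  have b1 := bnum_le_one b
  have c0 := bnum_nonneg c
  have c1 := bnum_le_one c
  have hA : (-3 : ℝ) ≤ ∑ l : Fin 5,
      RmatStar M istar (.E i b c) (.A l) * Wgt istar I (.A l) := by
    rw [Fin.sum_univ_five]
    simp only [RS_EA, Fin.reduceEq, reduceIte]
    have w0 := wgt_nonneg istar I (.A 0); have w0' := wgt_A_le istar I 0
    have w2 := wgt_nonneg istar I (.A 2); have w2' := wgt_A_le istar I 2
    nlinarith [mul_nonneg (add_nonneg b0 c0) w0]
  have hB : (-10 : ℝ) ≤ ∑ j : Fin m,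
      RmatStar M istar (.E i b c) (.B j) * Wgt istar I (.B j) := by
    refine sum_B_lower istar I i (-3 + bnum b + bnum c) (by linarith) (by linarith) _
      fun j => RS_EB M istar i b c j
  have hC : (-6 : ℝ) ≤ ∑ l : Fin 2,
      RmatStar M istar (.E i b c) (.C l) * Wgt istar I (.C l) := by
    rw [Fin.sum_univ_two]
    simp only [RS_EC, Fin.reduceEq, reduceIte]
    have u0 := wgt_nonneg istar I (.C 0); have u0' := wgt_C_le istar I 0
    have u1 := wgt_nonneg istar I (.C 1); have u1' := wgt_C_le istar I 1
    nlinarith [mul_nonneg b0 u0, mul_nonneg c0 u1]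
  have hD : (∑ l : Fin 2,
      RmatStar M istar (.E i b c) (.D l) * Wgt istar I (.D l)) = 0 := by
    simp [RS_ED]
  have hE : (∑ t : Fin m × Bool × Bool,
      RmatStar M istar (.E i b c) (.E t.1 t.2.1 t.2.2) * Wgt istar I (.E t.1 t.2.1 t.2.2))
      = 100 := by
    have e : ∀ t : Fin m × Bool × Bool,
        RmatStar M istar (.E i b c) (.E t.1 t.2.1 t.2.2) * Wgt istar I (.E t.1 t.2.1 t.2.2)
          = if t.1 = i ∧ t.2.1 = b ∧ t.2.2 = c
              then Wgt istar I (.E t.1 t.2.1 t.2.2) else 0 := by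
      intro t; rw [RS_EE, ite_mul, one_mul, zero_mul]
    rw [Finset.sum_congr rfl fun t _ => e t,
      sum_triple (fun t => Wgt istar I (.E t.1 t.2.1 t.2.2)) i b c]
    exact wgt_E_mem istar I hp
  have hF : (0 : ℝ) ≤ ∑ t : Fin m × Bool × Bool,
      RmatStar M istar (.E i b c) (.F t.1 t.2.1 t.2.2) * Wgt istar I (.F t.1 t.2.1 t.2.2) := by
    refine Finset.sum_nonneg fun t _ => mul_nonneg ?_ (wgt_nonneg _ _ _)
    rw [RS_EF]; split_ifs <;> norm_num
  rw [hD, hE]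
  linarith

lemma key_F {i : Fin m} {b c : Bool} (hp : Idx.F i b c ∈ I) :
    0 < ∑ q, RmatStar M istar (.F i b c) q * Wgt istar I q := by
  rw [sum_idx]
  have b0 := bnum_nonneg b
  have b1 := bnum_le_one b
  have c0 := bnum_nonneg c
  have c1 := bnum_le_one c
  have hA : (-7 : ℝ) ≤ ∑ l : Fin 5,
      RmatStar M istar (.F i b c) (.A l) * Wgt istar I (.A l) := by
    rw [Fin.sum_univ_five]
    simp only [RS_FA, Fin.reduceEq, reduceIte]
    have w0 := wgt_nonneg istar I (.A 0); have w0' := wgt_A_le istar I 0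
    have w2 := wgt_nonneg istar I (.A 2); have w2' := wgt_A_le istar I 2
    have w3 := wgt_nonneg istar I (.A 3); have w3' := wgt_A_le istar I 3
    have w4 := wgt_nonneg istar I (.A 4)
    nlinarith [mul_nonneg (add_nonneg b0 c0) w0]
  have hB : (-10 : ℝ) ≤ ∑ j : Fin m,
      RmatStar M istar (.F i b c) (.B j) * Wgt istar I (.B j) := by
    refine sum_B_lower istar I i (-4 + bnum b + bnum c) (by linarith) (by linarith) _
      fun j => RS_FB M istar i b c j
  have hC : (-6 : ℝ) ≤ ∑ l : Fin 2,
      RmatStar M istar (.F i b c) (.C l) * Wgt istar I (.C l) := by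
    rw [Fin.sum_univ_two]
    simp only [RS_FC, Fin.reduceEq, reduceIte]
    have u0 := wgt_nonneg istar I (.C 0); have u0' := wgt_C_le istar I 0
    have u1 := wgt_nonneg istar I (.C 1); have u1' := wgt_C_le istar I 1
    nlinarith [mul_nonneg b0 u0, mul_nonneg c0 u1]
  have hD : (∑ l : Fin 2,
      RmatStar M istar (.F i b c) (.D l) * Wgt istar I (.D l)) = 0 := by
    simp [RS_FD]
  have hE : (0 : ℝ) ≤ ∑ t : Fin m × Bool × Bool,
      RmatStar M istar (.F i b c) (.E t.1 t.2.1 t.2.2) * Wgt istar I (.E t.1 t.2.1 t.2.2) := by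
    refine Finset.sum_nonneg fun t _ => mul_nonneg ?_ (wgt_nonneg _ _ _)
    rw [RS_FE]; split_ifs <;> norm_num
  have hF : (∑ t : Fin m × Bool × Bool,
      RmatStar M istar (.F i b c) (.F t.1 t.2.1 t.2.2) * Wgt istar I (.F t.1 t.2.1 t.2.2))
      = 100 := by
    have e : ∀ t : Fin m × Bool × Bool,
        RmatStar M istar (.F i b c) (.F t.1 t.2.1 t.2.2) * Wgt istar I (.F t.1 t.2.1 t.2.2)
          = if t.1 = i ∧ t.2.1 = b ∧ t.2.2 = c
              then Wgt istar I (.F t.1 t.2.1 t.2.2) else 0 := by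
      intro t; rw [RS_FF, ite_mul, one_mul, zero_mul]
    rw [Finset.sum_congr rfl fun t _ => e t,
      sum_triple (fun t => Wgt istar I (.F t.1 t.2.1 t.2.2)) i b c]
    exact wgt_F_mem istar I hp
  rw [hD, hF]
  linarith

end Key3
section Final

variable {m : ℕ}

lemma key_pos (M : CounterMachine m) (istar : Fin m) (I : Finset (Idx m))
    {p : Idx m} (hp : p ∈ I) :
    0 < ∑ q, RmatStar M istar p q * Wgt istar I q := by
  cases p with
  | A k => exact key_A M istar I hp
  | B j => exact key_B M istar I hp
  | C k => exact key_C M istar I hp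
  | D k => exact key_D M istar I hp
  | E i b c => exact key_E M istar I hp
  | F i b c => exact key_F M istar I hp

end Final

/-- For every consistent counter machine and halting state,
the modified reflection matrix `R*` is completely-S. -/
theorem RmatStar_isCompletelyS {m : ℕ} (M : CounterMachine m) (istar : Fin m) :
    IsCompletelyS (RmatStar M istar) := by
  intro I _hI
  refine ⟨fun a => Wgt istar I (a : Idx m), fun a => wgt_nonneg istar I _, fun a => ?_⟩
  have : ((RmatStar M istar).submatrix (fun a : I => (a : Idx m)) (fun a : I => (a : Idx m))).mulVec
      (fun a => Wgt istar I (a : Idx m)) a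
      = ∑ q, RmatStar M istar (a : Idx m) q * Wgt istar I q := by
    rw [Matrix.mulVec, dotProduct]
    simp only [Matrix.submatrix_apply]
    rw [Finset.sum_coe_sort I (fun q => RmatStar M istar (a : Idx m) q * Wgt istar I q)]
    refine Finset.sum_subset I.subset_univ fun q _ hq => ?_
    rw [wgt_notMem istar I hq, mul_zero]
  rw [this]
  exact key_pos M istar I a.2
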